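/- A nondegenerate distribution function G is freely max-stable if and only if there exist constants a > 0 and b ∈ ℝ such that one of the following holds for all x ∈ ℝ: G(a·x + b) = E(x) (Type I), or G(a·x + b) = P_α(x) for some α > 0 (Type II), or G(a·x + b) = B_α(x) for some α > 0 (Type III). -/

import Mathlib

open Filter Topology

def IsDistFun (F : ℝ → ℝ) : Prop :=
  Monotone F ∧ (∀ x, ContinuousWithinAt F (Set.Ici x) x) ∧
    Tendsto F atBot (𝓝 0) ∧ Tendsto F atTop (𝓝 1)

noncomputable def freePow (F : ℝ → ℝ) (n : ℕ) (x : ℝ) : ℝ :=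
  max ((n : ℝ) * F x - ((n : ℝ) - 1)) 0

def FreelyMaxStable (F : ℝ → ℝ) : Prop :=
  ∀ n : ℕ, 1 ≤ n → ∃ a b : ℝ, 0 < a ∧ ∀ x : ℝ, freePow F n (a * x + b) = F x

noncomputable def expDF (x : ℝ) : ℝ := max (1 - Real.exp (-x)) 0

noncomputable def paretoDF (α : ℝ) (x : ℝ) : ℝ :=
  if 0 < x then max (1 - x ^ (-α)) 0 else 0

noncomputable def betaDF (α : ℝ) (x : ℝ) : ℝ :=
  if x ≤ -1 then 0 else if x ≤ 0 then 1 - |x| ^ α else 1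

-- Vchar
lemma Vchar (T : ℝ → ℝ) (hanti : Antitone T)
    (hrc : ∀ x, ContinuousWithinAt T (Set.Ici x) x)
    (htop : Tendsto T atTop (𝓝 0)) (hbot : Tendsto T atBot (𝓝 1))
    {s : ℝ} (hs0 : 0 < s) (hs1 : s < 1) :
    ∀ y, T y ≤ s ↔ sInf {x | T x ≤ s} ≤ y := by
  have hne : {x | T x ≤ s}.Nonempty := by
    obtain ⟨x, hx⟩ := (Filter.Tendsto.eventually_lt_const hs0 htop).exists
    exact ⟨x, hx.le⟩
  have hbdd : BddBelow {x | T x ≤ s} := by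
    obtain ⟨xm, hxm⟩ := eventually_atBot.mp (Filter.Tendsto.eventually_const_lt hs1 hbot)
    refine ⟨xm, fun y hy => ?_⟩
    by_contra hc
    push_neg at hc
    exact absurd hy (not_le.mpr (hxm y hc.le))
  set m := sInf {x | T x ≤ s} with hm
  have hTm : T m ≤ s := by
    have hofgt : ∀ x, m < x → T x ≤ s := by
      intro x hx
      obtain ⟨z, hz, hzx⟩ := exists_lt_of_csInf_lt hne hx
      exact le_trans (hanti hzx.le) hz
    have htd : Tendsto T (𝓝[>] m) (𝓝 (T m)) :=
      ((hrc m).mono_left (nhdsWithin_mono m Set.Ioi_subset_Ici_self))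
    exact le_of_tendsto htd (eventually_nhdsWithin_of_forall hofgt)
  intro y
  constructor
  · exact fun h => csInf_le hbdd h
  · intro h
    exact le_trans (hanti h) hTm

/-- positive logs of rationals -/
def DDr (r : ℝ) : Prop := ∃ q : ℚ, 1 < q ∧ r = Real.log q

lemma DDr_pos {r : ℝ} (h : DDr r) : 0 < r := by
  obtain ⟨q, hq, rfl⟩ := h
  exact Real.log_pos (by exact_mod_cast hq)

lemma DDr_add {r r' : ℝ} (h : DDr r) (h' : DDr r') : DDr (r + r') := by
  obtain ⟨q, hq, rfl⟩ := h
  obtain ⟨q', hq', rfl⟩ := h'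
  refine ⟨q * q', one_lt_mul_of_lt_of_le hq (by linarith), ?_⟩
  push_cast
  rw [Real.log_mul (by positivity) (by positivity)]

lemma DDr_sub {r r' : ℝ} (h : DDr r) (h' : DDr r') (hlt : r < r') : DDr (r' - r) := by
  obtain ⟨q, hq, rfl⟩ := h
  obtain ⟨q', hq', rfl⟩ := h'
  have hq0 : (0:ℝ) < (q:ℝ) := by exact_mod_cast lt_trans one_pos hq
  have hq'0 : (0:ℝ) < (q':ℝ) := by exact_mod_cast lt_trans one_pos hq'
  have hqq : (q:ℝ) < (q':ℝ) := by
    have := Real.exp_lt_exp.mpr hlt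
    rwa [Real.exp_log hq0, Real.exp_log hq'0] at this
  have hqq' : q < q' := by exact_mod_cast hqq
  refine ⟨q' / q, ?_, ?_⟩
  · rw [lt_div_iff₀ (by exact_mod_cast lt_trans one_pos hq)]
    linarith
  · push_cast
    rw [Real.log_div (ne_of_gt hq'0) (ne_of_gt hq0)]

lemma DDr_between {u v : ℝ} (hu : 0 < u) (huv : u < v) : ∃ r, DDr r ∧ u < r ∧ r < v := by
  obtain ⟨q, hq1, hq2⟩ := exists_rat_btwn (Real.exp_lt_exp.mpr huv)
  have h1 : (1:ℝ) < q := lt_trans (Real.one_lt_exp_iff.mpr hu) hq1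
  refine ⟨Real.log q, ⟨q, by exact_mod_cast h1, rfl⟩, ?_, ?_⟩
  · calc u = Real.log (Real.exp u) := (Real.log_exp u).symm
      _ < Real.log q := Real.log_lt_log (Real.exp_pos u) hq1
  · calc Real.log q < Real.log (Real.exp v) := Real.log_lt_log (by linarith) hq2
      _ = v := Real.log_exp v

lemma DDr_nsmul {f : ℝ → ℝ}
    (hadd : ∀ r r', DDr r → DDr r' → f (r + r') = f r + f r') :
    ∀ j : ℕ, 1 ≤ j → ∀ r, DDr r → DDr ((j:ℝ) * r) ∧ f ((j:ℝ) * r) = (j:ℝ) * f r := by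
  intro j hj
  induction j with
  | zero => omega
  | succ k ih =>
    intro r hr
    rcases Nat.eq_or_lt_of_le hj with h1 | h1
    · have hk0 : k = 0 := by omega
      subst hk0
      refine ⟨by simpa using hr, by norm_num⟩
    · have hk : 1 ≤ k := by omega
      obtain ⟨hD, hf⟩ := ih hk r hr
      have e : ((k+1:ℕ):ℝ) * r = (k:ℝ) * r + r := by push_cast; ring
      constructor
      · rw [e]; exact DDr_add hD hr
      · rw [e, hadd _ _ hD hr, hf]; push_cast; ring

lemma aux_linear (f : ℝ → ℝ)
    (hadd : ∀ r r', DDr r → DDr r' → f (r + r') = f r + f r')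
    (hmono : ∀ r r', DDr r → DDr r' → r ≤ r' → f r ≤ f r')
    (r₀ : ℝ) (h₀ : DDr r₀) (hf₀ : 0 < f r₀) :
    ∀ r, DDr r → f r = (f r₀ / r₀) * r := by
  intro r hr
  have hrpos := DDr_pos hr
  have hr₀pos := DDr_pos h₀
  have hfnn : 0 ≤ f r := by
    have h2 := hmono r (r + r) hr (DDr_add hr hr) (by linarith)
    have h3 := hadd r r hr hr
    linarith
  have claimA : ∀ k j : ℕ, 1 ≤ k → 1 ≤ j → (k:ℝ) * r₀ ≤ (j:ℝ) * r →
      (k:ℝ) * f r₀ ≤ (j:ℝ) * f r := by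
    intro k j hk hj hle
    obtain ⟨hD1, hf1⟩ := DDr_nsmul hadd k hk r₀ h₀
    obtain ⟨hD2, hf2⟩ := DDr_nsmul hadd j hj r hr
    rw [← hf1, ← hf2]
    exact hmono _ _ hD1 hD2 hle
  have claimB : ∀ k j : ℕ, 1 ≤ k → 1 ≤ j → (j:ℝ) * r ≤ (k:ℝ) * r₀ →
      (j:ℝ) * f r ≤ (k:ℝ) * f r₀ := by
    intro k j hk hj hle
    obtain ⟨hD1, hf1⟩ := DDr_nsmul hadd k hk r₀ h₀
    obtain ⟨hD2, hf2⟩ := DDr_nsmul hadd j hj r hr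
    rw [← hf1, ← hf2]
    exact hmono _ _ hD2 hD1 hle
  have main : f r * r₀ = f r₀ * r := by
    by_contra hne
    rcases lt_or_gt_of_ne hne with hlt | hgt
    · -- f r / f r₀ < r / r₀
      have hdiv : f r / f r₀ < r / r₀ := (div_lt_div_iff₀ hf₀ hr₀pos).mpr (by linarith)
      obtain ⟨q, hq1, hq2⟩ := exists_rat_btwn hdiv
      have hq0 : 0 < q := by
        have : (0:ℝ) < (q:ℝ) := lt_of_le_of_lt (by positivity) hq1
        exact_mod_cast this
      set k : ℕ := q.num.toNat with hk
      set j : ℕ := q.den with hj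
      have hk1 : 1 ≤ k := by
        have := Rat.num_pos.mpr hq0
        omega
      have hj1 : 1 ≤ j := q.pos
      have hcast : (q:ℝ) = (k:ℝ) / (j:ℝ) := by
        have hnum : ((q.num.toNat : ℕ) : ℝ) = ((q.num : ℤ) : ℝ) := by
          exact_mod_cast congrArg (fun z : ℤ => (z : ℝ)) (Int.toNat_of_nonneg (le_of_lt (Rat.num_pos.mpr hq0)))
        rw [Rat.cast_def, hk, hj, hnum]
      have hjpos : (0:ℝ) < (j:ℝ) := by exact_mod_cast hj1
      have hkr : (k:ℝ) * r₀ < (j:ℝ) * r := by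
        rw [hcast] at hq2
        have := (div_lt_div_iff₀ hjpos hr₀pos).mp hq2
        linarith
      have hkey := claimA k j hk1 hj1 hkr.le
      have : (q:ℝ) ≤ f r / f r₀ := by
        rw [hcast, div_le_div_iff₀ hjpos hf₀]
        linarith
      linarith
    · have hdiv : r / r₀ < f r / f r₀ := (div_lt_div_iff₀ hr₀pos hf₀).mpr (by linarith)
      obtain ⟨q, hq1, hq2⟩ := exists_rat_btwn hdiv
      have hq0 : 0 < q := by
        have : (0:ℝ) < (q:ℝ) := lt_of_le_of_lt (by positivity) hq1
        exact_mod_cast this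
      set k : ℕ := q.num.toNat with hk
      set j : ℕ := q.den with hj
      have hk1 : 1 ≤ k := by
        have := Rat.num_pos.mpr hq0
        omega
      have hj1 : 1 ≤ j := q.pos
      have hcast : (q:ℝ) = (k:ℝ) / (j:ℝ) := by
        have hnum : ((q.num.toNat : ℕ) : ℝ) = ((q.num : ℤ) : ℝ) := by
          exact_mod_cast congrArg (fun z : ℤ => (z : ℝ)) (Int.toNat_of_nonneg (le_of_lt (Rat.num_pos.mpr hq0)))
        rw [Rat.cast_def, hk, hj, hnum]
      have hjpos : (0:ℝ) < (j:ℝ) := by exact_mod_cast hj1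
      have hkr : (j:ℝ) * r < (k:ℝ) * r₀ := by
        rw [hcast] at hq1
        have := (div_lt_div_iff₀ hr₀pos hjpos).mp hq1
        linarith
      have hkey := claimB k j hk1 hj1 hkr.le
      have : f r / f r₀ ≤ (q:ℝ) := by
        rw [hcast, div_le_div_iff₀ hf₀ hjpos]
        linarith
      linarith
  field_simp
  linarith [main]

lemma aux_sandwich (Z g h : ℝ → ℝ)
    (hmono : ∀ t t', 0 < t → t ≤ t' → Z t ≤ Z t')
    (hg : Continuous g) (hh : Continuous h)
    (hrel : ∀ r t, DDr r → 0 < t → Z (t + r) = g r * Z t + h r) :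
    ∀ t t', 0 < t → t < t' → Z t' = g (t' - t) * Z t + h (t' - t) := by
  intro t t' ht htt
  set Δ := t' - t with hΔ
  have hΔpos : 0 < Δ := by rw [hΔ]; linarith
  have htend : Tendsto (fun k : ℕ => 1/((k:ℝ)+1)) atTop (𝓝 0) :=
    tendsto_one_div_add_atTop_nhds_zero_nat
  -- upper sequence
  have hub : ∀ k : ℕ, ∃ r, DDr r ∧ Δ < r ∧ r < Δ + 1/((k:ℝ)+1) := by
    intro k
    have : (0:ℝ) < 1/((k:ℝ)+1) := by positivity
    exact DDr_between hΔpos (by linarith)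
  choose ru hruD hru1 hru2 using hub
  have hrut : Tendsto ru atTop (𝓝 Δ) := by
    have hup : Tendsto (fun k : ℕ => Δ + 1/((k:ℝ)+1)) atTop (𝓝 Δ) := by
      have := (tendsto_const_nhds : Tendsto (fun _ : ℕ => Δ) atTop (𝓝 Δ)).add htend
      simpa using this
    exact tendsto_of_tendsto_of_tendsto_of_le_of_le tendsto_const_nhds hup
      (fun k => (hru1 k).le) (fun k => (hru2 k).le)
  have hlim : Tendsto (fun k => g (ru k) * Z t + h (ru k)) atTop (𝓝 (g Δ * Z t + h Δ)) :=
    (((hg.tendsto Δ).comp hrut).mul tendsto_const_nhds).add ((hh.tendsto Δ).comp hrut)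
  have hle1 : Z t' ≤ g Δ * Z t + h Δ := by
    apply ge_of_tendsto hlim
    filter_upwards with k
    have h1 : Z t' ≤ Z (t + ru k) := by
      apply hmono t' (t + ru k) (by linarith)
      have := hru1 k
      rw [hΔ] at this
      linarith
    rw [hrel _ _ (hruD k) ht] at h1
    exact h1
  -- lower sequence
  have hlb : ∀ k : ℕ, ∃ r, DDr r ∧ max (Δ/2) (Δ - 1/((k:ℝ)+1)) < r ∧ r < Δ := by
    intro k
    apply DDr_between
    · exact lt_of_lt_of_le (by linarith) (le_max_left _ _)
    · apply max_lt (by linarith)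
      have : 0 < 1/((k:ℝ)+1) := by positivity
      linarith
  choose rl hrlD hrl1 hrl2 using hlb
  have hrlt : Tendsto rl atTop (𝓝 Δ) := by
    have hlow : Tendsto (fun k : ℕ => Δ - 1/((k:ℝ)+1)) atTop (𝓝 Δ) := by
      have := (tendsto_const_nhds : Tendsto (fun _ : ℕ => Δ) atTop (𝓝 Δ)).sub htend
      simpa using this
    apply tendsto_of_tendsto_of_tendsto_of_le_of_le hlow tendsto_const_nhds
    · intro k
      exact le_trans (le_max_right _ _) (hrl1 k).le
    · exact fun k => (hrl2 k).le
  have hlim2 : Tendsto (fun k => g (rl k) * Z t + h (rl k)) atTop (𝓝 (g Δ * Z t + h Δ)) :=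
    (((hg.tendsto Δ).comp hrlt).mul tendsto_const_nhds).add ((hh.tendsto Δ).comp hrlt)
  have hle2 : g Δ * Z t + h Δ ≤ Z t' := by
    apply le_of_tendsto hlim2
    filter_upwards with k
    have hrlpos : 0 < rl k := lt_of_le_of_lt (le_trans (by linarith : (0:ℝ) ≤ Δ/2) (le_max_left _ _)) (hrl1 k)
    have h1 : Z (t + rl k) ≤ Z t' := by
      apply hmono (t + rl k) t' (by linarith)
      have := hrl2 k
      rw [hΔ] at this
      linarith
    rw [hrel _ _ (hrlD k) ht] at h1
    exact h1
  linarith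

lemma expDF_fms : FreelyMaxStable expDF := by
  intro n hn
  have hn1 : (1:ℝ) ≤ (n:ℝ) := by exact_mod_cast hn
  have hnpos : (0:ℝ) < n := by linarith
  refine ⟨1, Real.log n, one_pos, fun x => ?_⟩
  have hy : (1:ℝ) * x + Real.log n = x + Real.log n := by ring
  rw [hy]
  unfold freePow expDF
  have hexp : Real.exp (-(x + Real.log n)) = Real.exp (-x) / n := by
    rw [neg_add, Real.exp_add, Real.exp_neg (Real.log _), Real.exp_log hnpos, Real.exp_neg]; ring
  have hln : 0 ≤ Real.log n := Real.log_nonneg hn1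
  rcases le_or_gt (x + Real.log n) 0 with h | h
  · have h1 : 1 ≤ Real.exp (-(x + Real.log n)) := by
      rw [← Real.exp_zero]; exact Real.exp_le_exp.mpr (by linarith)
    rw [max_eq_right (by linarith : 1 - Real.exp (-(x + Real.log n)) ≤ 0)]
    have h3 : 1 ≤ Real.exp (-x) := by
      rw [← Real.exp_zero]; exact Real.exp_le_exp.mpr (by linarith)
    rw [max_eq_right (by linarith : 1 - Real.exp (-x) ≤ 0)]
    exact max_eq_right (by nlinarith)
  · have h1 : Real.exp (-(x + Real.log n)) < 1 := by
      rw [← Real.exp_zero]; exact Real.exp_lt_exp.mpr (by linarith)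
    rw [max_eq_left (by linarith : (0:ℝ) ≤ 1 - Real.exp (-(x + Real.log n)))]
    have key : (n:ℝ) * (1 - Real.exp (-(x + Real.log n))) - ((n:ℝ) - 1) = 1 - Real.exp (-x) := by
      rw [hexp]; field_simp; ring
    rw [key]

lemma paretoDF_fms (α : ℝ) (hα : 0 < α) : FreelyMaxStable (paretoDF α) := by
  intro n hn
  have hn1 : (1:ℝ) ≤ (n:ℝ) := by exact_mod_cast hn
  have hnpos : (0:ℝ) < n := by linarith
  have hc : (0:ℝ) < (n:ℝ) ^ (1/α) := Real.rpow_pos_of_pos hnpos _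
  refine ⟨(n:ℝ) ^ (1/α), 0, hc, fun x => ?_⟩
  rw [add_zero]
  unfold freePow paretoDF
  rcases le_or_gt x 0 with hx | hx
  · have hy : ¬ (0 < (n:ℝ) ^ (1/α) * x) := by
      push_neg; exact mul_nonpos_of_nonneg_of_nonpos hc.le hx
    rw [if_neg hy, if_neg (not_lt.mpr hx)]
    exact max_eq_right (by nlinarith)
  · have hy : 0 < (n:ℝ) ^ (1/α) * x := mul_pos hc hx
    rw [if_pos hy, if_pos hx]
    have hpow : ((n:ℝ) ^ (1/α) * x) ^ (-α) = x ^ (-α) / n := by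
      rw [Real.mul_rpow hc.le hx.le, ← Real.rpow_mul hnpos.le]
      have e : (1/α) * (-α) = (-1 : ℝ) := by field_simp
      rw [e, Real.rpow_neg_one]
      ring
    rcases le_or_gt (1 - ((n:ℝ) ^ (1/α) * x) ^ (-α)) 0 with h | h
    · rw [max_eq_right h]
      have hxs : 1 ≤ x ^ (-α) := by
        rw [hpow] at h
        have h2 : (1:ℝ) ≤ x ^ (-α) / n := by linarith
        have h3 : (n:ℝ) ≤ x ^ (-α) := (one_le_div hnpos).mp h2
        linarith
      rw [max_eq_right (by linarith : 1 - x ^ (-α) ≤ 0)]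
      exact max_eq_right (by nlinarith)
    · rw [max_eq_left h.le]
      have key : (n:ℝ) * (1 - ((n:ℝ) ^ (1/α) * x) ^ (-α)) - ((n:ℝ) - 1) = 1 - x ^ (-α) := by
        rw [hpow]; field_simp; ring
      rw [key]

lemma betaDF_fms (α : ℝ) (hα : 0 < α) : FreelyMaxStable (betaDF α) := by
  intro n hn
  have hn1 : (1:ℝ) ≤ (n:ℝ) := by exact_mod_cast hn
  have hnpos : (0:ℝ) < n := by linarith
  have hc : (0:ℝ) < (n:ℝ) ^ (-(1/α)) := Real.rpow_pos_of_pos hnpos _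
  have hc1 : (n:ℝ) ^ (-(1/α)) ≤ 1 := by
    rw [Real.rpow_neg hnpos.le]
    have h1 : (1:ℝ) ≤ (n:ℝ) ^ (1/α) := Real.one_le_rpow hn1 (by positivity)
    exact inv_le_one_of_one_le₀ h1
  set c := (n:ℝ) ^ (-(1/α)) with hcdef
  have hcpow : c ^ α = 1 / n := by
    rw [hcdef, ← Real.rpow_mul hnpos.le]
    have : (-(1/α)) * α = -1 := by field_simp
    rw [this, Real.rpow_neg_one]; exact (one_div _).symm
  refine ⟨c, 0, hc, fun x => ?_⟩
  rw [add_zero]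
  unfold freePow betaDF
  rcases lt_or_ge 0 x with hx | hx
  · have hy : ¬ (c * x ≤ -1) := by nlinarith
    have hy2 : ¬ (c * x ≤ 0) := by push_neg; positivity
    rw [if_neg hy, if_neg hy2, if_neg (by linarith : ¬ x ≤ -1), if_neg (by linarith : ¬ x ≤ 0)]
    have e : (n:ℝ) * 1 - ((n:ℝ) - 1) = 1 := by ring
    rw [e]
    exact max_eq_left zero_le_one
  · -- x ≤ 0, c * x ≤ 0
    have hcx : c * x ≤ 0 := mul_nonpos_of_nonneg_of_nonpos hc.le hx
    have habs : |c * x| ^ α = |x| ^ α / n := by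
      rw [abs_mul, abs_of_pos hc, Real.mul_rpow hc.le (abs_nonneg _), hcpow]; ring
    rcases le_or_gt (c * x) (-1) with h | h
    · -- then x ≤ -1
      have hx1 : x ≤ -1 := by nlinarith
      rw [if_pos h, if_pos hx1]
      exact max_eq_right (by nlinarith)
    · rw [if_neg (not_le.mpr h), if_pos hcx]
      have key : (n:ℝ) * (1 - |c * x| ^ α) - ((n:ℝ) - 1) = 1 - |x| ^ α := by
        rw [habs]; field_simp; ring
      rw [key]
      rcases le_or_gt x (-1) with hx1 | hx1
      · rw [if_pos hx1]
        have : (1:ℝ) ≤ |x| ^ α := by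
          apply Real.one_le_rpow _ hα.le
          rw [abs_of_nonpos hx]; linarith
        exact max_eq_right (by linarith)
      · rw [if_neg (not_le.mpr hx1), if_pos hx]
        have : |x| ^ α < 1 := by
          rcases eq_or_lt_of_le hx with h0 | h0
          · rw [h0, abs_zero, Real.zero_rpow hα.ne']; norm_num
          · apply Real.rpow_lt_one (abs_nonneg _) _ hα
            rw [abs_of_neg h0]; linarith
        exact max_eq_left (by linarith)

lemma transfer_fms (G D : ℝ → ℝ) (a b : ℝ) (ha : 0 < a)
    (h : ∀ x, G (a * x + b) = D x) (hD : FreelyMaxStable D) : FreelyMaxStable G := by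
  have hG : ∀ y, G y = D ((y - b) / a) := by
    intro y
    have e : a * ((y - b) / a) + b = y := by field_simp; ring
    conv_lhs => rw [← e]
    exact h _
  intro n hn
  obtain ⟨A, B, hA, hDB⟩ := hD n hn
  refine ⟨A, b - A * b + a * B, hA, fun x => ?_⟩
  unfold freePow
  rw [hG (A * x + (b - A * b + a * B)), hG x]
  have harg : (A * x + (b - A * b + a * B) - b) / a = A * ((x - b) / a) + B := by
    field_simp; ring
  rw [harg]
  exact hDB _

section Forward

set_option maxHeartbeats 3000000 in
lemma forward_classification (G : ℝ → ℝ) (hG : IsDistFun G)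
    (hnd : ∃ x, 0 < G x ∧ G x < 1) (hms : FreelyMaxStable G) :
    ∃ a b : ℝ, 0 < a ∧
        ((∀ x : ℝ, G (a * x + b) = expDF x) ∨
         (∃ α : ℝ, 0 < α ∧ ∀ x : ℝ, G (a * x + b) = paretoDF α x) ∨
         (∃ α : ℝ, 0 < α ∧ ∀ x : ℝ, G (a * x + b) = betaDF α x)) := by
  classical
  obtain ⟨hmono, hrc, hbot, htop⟩ := hG
  set T : ℝ → ℝ := fun x => 1 - G x with hTdef
  have hG1 : ∀ x, G x ≤ 1 := by
    intro x
    refine ge_of_tendsto htop ?_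
    filter_upwards [eventually_ge_atTop x] with y hy
    exact hmono hy
  have hG0 : ∀ x, 0 ≤ G x := by
    intro x
    refine le_of_tendsto hbot ?_
    filter_upwards [eventually_le_atBot x] with y hy
    exact hmono hy
  have hT0 : ∀ x, 0 ≤ T x := fun x => by simp [hTdef, hG1 x]
  have hT1 : ∀ x, T x ≤ 1 := fun x => by simp [hTdef]; linarith [hG0 x]
  have hTanti : Antitone T := fun x y hxy => by simp [hTdef]; linarith [hmono hxy]
  have hTrc : ∀ x, ContinuousWithinAt T (Set.Ici x) x := fun x =>
    continuousWithinAt_const.sub (hrc x)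
  have hTtop : Tendsto T atTop (𝓝 0) := by
    have : Tendsto (fun x => 1 - G x) atTop (𝓝 (1 - 1)) := tendsto_const_nhds.sub htop
    simpa using this
  have hTbot : Tendsto T atBot (𝓝 1) := by
    have : Tendsto (fun x => 1 - G x) atBot (𝓝 (1 - 0)) := tendsto_const_nhds.sub hbot
    simpa using this
  choose aa bb hab using hms
  have hapos : ∀ (n : ℕ) (hn : 1 ≤ n), 0 < aa n hn := fun n hn => (hab n hn).1
  have hTmin : ∀ (n : ℕ) (hn : 1 ≤ n), ∀ x, T x = min ((n:ℝ) * T (aa n hn * x + bb n hn)) 1 := by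
    intro n hn x
    have h := (hab n hn).2 x
    unfold freePow at h
    set y := aa n hn * x + bb n hn
    have hn1 : (1:ℝ) ≤ (n:ℝ) := by exact_mod_cast hn
    rcases le_total ((n:ℝ) * T y) 1 with hc | hc
    · rw [min_eq_left hc]
      have hge : (0:ℝ) ≤ (n:ℝ) * G y - ((n:ℝ) - 1) := by
        have : (n:ℝ) * T y = (n:ℝ) - (n:ℝ) * G y := by simp [hTdef]; ring
        linarith [this ▸ hc]
      rw [max_eq_left hge] at h
      simp [hTdef]
      have hTy : (n:ℝ) * T y = (n:ℝ) - (n:ℝ) * G y := by simp [hTdef]; ring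
      linarith
    · rw [min_eq_right hc]
      have hle : (n:ℝ) * G y - ((n:ℝ) - 1) ≤ 0 := by
        have : (n:ℝ) * T y = (n:ℝ) - (n:ℝ) * G y := by simp [hTdef]; ring
        linarith
      rw [max_eq_right hle] at h
      simp [hTdef, ← h]
  set V : ℝ → ℝ := fun s => sInf {x | T x ≤ s} with hVdef
  have hV : ∀ s, 0 < s → s < 1 → ∀ y, (T y ≤ s ↔ V s ≤ y) :=
    fun s hs0 hs1 => Vchar T hTanti hTrc hTtop hTbot hs0 hs1
  have hTV : ∀ s, 0 < s → s < 1 → T (V s) ≤ s := fun s hs0 hs1 =>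
    (hV s hs0 hs1 (V s)).mpr le_rfl
  -- the functional equation for V
  have feq : ∀ (n : ℕ) (hn : 1 ≤ n), ∀ s, 0 < s → s < 1 →
      V (s / n) = aa n hn * V s + bb n hn := by
    intro n hn s hs0 hs1
    have hn1 : (1:ℝ) ≤ (n:ℝ) := by exact_mod_cast hn
    have hnpos : (0:ℝ) < (n:ℝ) := by linarith
    have hsn0 : 0 < s / n := by positivity
    have hsn1 : s / n < 1 := lt_of_le_of_lt (div_le_self hs0.le hn1) hs1
    set a := aa n hn
    set b := bb n hn
    have ha : 0 < a := hapos n hn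
    have hiff : ∀ x, V s ≤ x ↔ (V (s/n) - b) / a ≤ x := by
      intro x
      rw [← hV s hs0 hs1 x]
      rw [hTmin n hn x]
      constructor
      · intro h
        have h2 : (n:ℝ) * T (a * x + b) ≤ s := by
          rcases min_le_iff.mp h with h3 | h3
          · exact h3
          · linarith
        have h3 : T (a * x + b) ≤ s / n := by
          rw [le_div_iff₀ hnpos]; linarith
        have h4 := (hV (s/n) hsn0 hsn1 (a * x + b)).mp h3
        rw [div_le_iff₀ ha]; linarith
      · intro h
        have h2 : V (s/n) ≤ a * x + b := by
          rw [div_le_iff₀ ha] at h; linarith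
        have h3 := (hV (s/n) hsn0 hsn1 (a * x + b)).mpr h2
        have h4 : (n:ℝ) * T (a * x + b) ≤ s := by
          rw [le_div_iff₀ hnpos] at h3; linarith
        exact le_trans (min_le_left _ _) h4
    have e1 : V s = (V (s/n) - b) / a := by
      have h1 := (hiff (V s)).mp le_rfl
      have h2 := (hiff ((V (s/n) - b) / a)).mpr le_rfl
      linarith
    rw [e1]
    field_simp
    ring
  -- nondegeneracy of V
  obtain ⟨x₀, hx₀0, hx₀1⟩ := hnd
  set s₀ := T x₀ with hs₀def
  have hs₀0 : 0 < s₀ := by simp [hs₀def, hTdef]; linarith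
  have hs₀1 : s₀ < 1 := by simp [hs₀def, hTdef]; linarith
  have hVx₀ : V s₀ ≤ x₀ := (hV s₀ hs₀0 hs₀1 x₀).mp le_rfl
  have hVlt : V s₀ < V (s₀ / 2) := by
    have hh0 : 0 < s₀ / 2 := by linarith
    have hh1 : s₀ / 2 < 1 := by linarith
    have hle : V s₀ ≤ V (s₀ / 2) := by
      apply (hV s₀ hs₀0 hs₀1 (V (s₀/2))).mp
      exact le_trans (hTV (s₀/2) hh0 hh1) (by linarith)
    rcases lt_or_eq_of_le hle with h | h
    · exact h
    · exfalso
      have : T x₀ ≤ s₀ / 2 := (hV (s₀/2) hh0 hh1 x₀).mpr (by rw [← h]; exact hVx₀)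
      rw [← hs₀def] at this
      linarith
  -- W
  set W : ℝ → ℝ := fun t => V (Real.exp (-t)) with hWdef
  set t₁ := -Real.log s₀ with ht₁def
  set t₂ := -Real.log (s₀ / 2) with ht₂def
  have ht₁pos : 0 < t₁ := by
    rw [ht₁def]; simp; exact Real.log_neg hs₀0 hs₀1
  have ht₁₂ : t₁ < t₂ := by
    rw [ht₁def, ht₂def]
    have := Real.log_lt_log (by linarith : (0:ℝ) < s₀/2) (by linarith : s₀/2 < s₀)
    linarith
  have hWt₁ : W t₁ = V s₀ := by
    rw [hWdef]; simp only [ht₁def, neg_neg]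
    rw [Real.exp_log hs₀0]
  have hWt₂ : W t₂ = V (s₀ / 2) := by
    rw [hWdef]; simp only [ht₂def, neg_neg]
    rw [Real.exp_log (by linarith : (0:ℝ) < s₀/2)]
  have hWlt : W t₁ < W t₂ := by rw [hWt₁, hWt₂]; exact hVlt
  have hWmono : ∀ t t', 0 < t → t ≤ t' → W t ≤ W t' := by
    intro t t' ht htt
    have h1 : (0:ℝ) < Real.exp (-t') := Real.exp_pos _
    have h2 : Real.exp (-t') ≤ Real.exp (-t) := Real.exp_le_exp.mpr (by linarith)
    have h3 : Real.exp (-t) < 1 := by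
      rw [← Real.exp_zero]; exact Real.exp_lt_exp.mpr (by linarith)
    have h4 : Real.exp (-t') < 1 := by
      rw [← Real.exp_zero]; exact Real.exp_lt_exp.mpr (by linarith)
    apply (hV (Real.exp (-t)) (Real.exp_pos _) h3 (W t')).mp
    exact le_trans (hTV _ h1 h4) h2
  -- uniqueness of affine representations
  have huniq : ∀ A₁ B₁ A₂ B₂ : ℝ, (∀ t, 0 < t → A₁ * W t + B₁ = A₂ * W t + B₂) →
      A₁ = A₂ ∧ B₁ = B₂ := by
    intro A₁ B₁ A₂ B₂ h
    have e1 := h t₁ ht₁pos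
    have e2 := h t₂ (by linarith)
    have e3 : (A₁ - A₂) * (W t₂ - W t₁) = 0 := by linear_combination e2 - e1
    have e4 : A₁ = A₂ := by
      rcases mul_eq_zero.mp e3 with h5 | h5
      · linarith [sub_eq_zero.mp h5]
      · exfalso; have := sub_eq_zero.mp h5; linarith
    exact ⟨e4, by rw [e4] at e1; linarith⟩
  -- structure maps
  have hstruct : ∀ r, DDr r → ∃ A B : ℝ, 0 < A ∧ ∀ t, 0 < t →
      W (t + r) = A * W t + B := by
    rintro r ⟨q, hq1, rfl⟩
    have hq0 : (0:ℝ) < (q:ℝ) := by exact_mod_cast lt_trans one_pos hq1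
    set n : ℕ := q.num.toNat with hn
    set m : ℕ := q.den with hm
    have hq0' : 0 < q := by exact_mod_cast hq0
    have hn1 : 1 ≤ n := by
      have := Rat.num_pos.mpr hq0'
      omega
    have hm1 : 1 ≤ m := q.pos
    have hmpos : (0:ℝ) < (m:ℝ) := by exact_mod_cast hm1
    have hcast : (q:ℝ) = (n:ℝ) / (m:ℝ) := by
      have hnum : ((q.num.toNat : ℕ) : ℝ) = ((q.num : ℤ) : ℝ) := by
        exact_mod_cast congrArg (fun z : ℤ => (z : ℝ))
          (Int.toNat_of_nonneg (le_of_lt (Rat.num_pos.mpr hq0')))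
      rw [Rat.cast_def, hn, hm, hnum]
    have hqm : (q:ℝ) * (m:ℝ) = (n:ℝ) := by rw [hcast]; field_simp
    refine ⟨aa n hn1 / aa m hm1, (bb n hn1 - bb m hm1) / aa m hm1,
      div_pos (hapos n hn1) (hapos m hm1), ?_⟩
    intro t ht
    have hrpos : 0 < Real.log q := Real.log_pos (by exact_mod_cast hq1)
    set s := Real.exp (-t) with hs
    have hs0 : 0 < s := Real.exp_pos _
    have hs1 : s < 1 := by
      rw [hs, ← Real.exp_zero]; exact Real.exp_lt_exp.mpr (by linarith)
    set s' := Real.exp (-(t + Real.log q)) with hs'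
    have hs'0 : 0 < s' := Real.exp_pos _
    have hs'1 : s' < 1 := by
      rw [hs', ← Real.exp_zero]; exact Real.exp_lt_exp.mpr (by linarith)
    have E1 := feq n hn1 s hs0 hs1
    have E2 := feq m hm1 s' hs'0 hs'1
    have hkey : s' / m = s / n := by
      rw [hs', hs]
      rw [neg_add, Real.exp_add, Real.exp_neg (Real.log _), Real.exp_log hq0]
      have hn0 : (n:ℝ) ≠ 0 := by positivity
      have hq0'' : (q:ℝ) ≠ 0 := ne_of_gt hq0
      have hm0 : (m:ℝ) ≠ 0 := ne_of_gt hmpos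
      field_simp
      linear_combination (-1 : ℝ) * hqm
    rw [hkey] at E2
    have hWt : W t = V s := rfl
    have hWtr : W (t + Real.log q) = V s' := rfl
    rw [E2] at E1
    rw [hWt, hWtr]
    have ham := hapos m hm1
    field_simp
    linarith
  choose AA BB hAApos hAB using hstruct
  -- representation of composite shifts
  have hrep : ∀ r r' (h : DDr r) (h' : DDr r'), ∀ t, 0 < t →
      W (t + (r + r')) = (AA r h * AA r' h') * W t +
        (AA r' h' * BB r h + BB r' h') := by
    intro r r' h h' t ht
    have htr : 0 < t + r := by linarith [DDr_pos h]
    have e0 : t + (r + r') = (t + r) + r' := by ring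
    rw [e0, hAB r' h' (t + r) htr, hAB r h t ht]
    ring
  have hprod : ∀ r r' (h : DDr r) (h' : DDr r'),
      AA (r+r') (DDr_add h h') = AA r h * AA r' h' ∧
      BB (r+r') (DDr_add h h') = AA r' h' * BB r h + BB r' h' := by
    intro r r' h h'
    apply huniq
    intro t ht
    rw [← hAB (r+r') (DDr_add h h') t ht, hrep r r' h h' t ht]
  have hcomm : ∀ r r' (h : DDr r) (h' : DDr r'),
      AA r' h' * BB r h + BB r' h' = AA r h * BB r' h' + BB r h := by
    intro r r' h h'
    have e1 : ∀ t, 0 < t → (AA r h * AA r' h') * W t + (AA r' h' * BB r h + BB r' h')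
        = (AA r' h' * AA r h) * W t + (AA r h * BB r' h' + BB r h) := by
      intro t ht
      rw [← hrep r r' h h' t ht]
      have e2 := hrep r' r h' h t ht
      rw [add_comm r' r] at e2
      rw [e2]
    exact (huniq _ _ _ _ e1).2
  by_cases hall : ∀ r (h : DDr r), AA r h = 1
  · -- Case A : Type I (exponential)
    set f : ℝ → ℝ := fun r => if h : DDr r then BB r h else 0 with hfdef
    have hfB : ∀ r (h : DDr r), f r = BB r h := fun r h => dif_pos h
    have hfadd : ∀ r r', DDr r → DDr r' → f (r + r') = f r + f r' := by
      intro r r' h h'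
      rw [hfB r h, hfB r' h', hfB (r+r') (DDr_add h h')]
      have h2 := (hprod r r' h h').2
      rw [hall r' h'] at h2
      rw [h2]; ring
    have hBnn : ∀ r (h : DDr r), 0 ≤ BB r h := by
      intro r h
      have h1 := hAB r h t₁ ht₁pos
      rw [hall r h, one_mul] at h1
      have h2 := hWmono t₁ (t₁ + r) ht₁pos (by linarith [DDr_pos h])
      linarith
    have hfmono : ∀ r r', DDr r → DDr r' → r ≤ r' → f r ≤ f r' := by
      intro r r' h h' hle
      rcases eq_or_lt_of_le hle with rfl | hlt
      · exact le_rfl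
      · have hsub := DDr_sub h h' hlt
        have e : r + (r' - r) = r' := by ring
        have h3 := hfadd r (r' - r) h hsub
        rw [e] at h3
        rw [h3, hfB _ hsub]
        linarith [hBnn _ hsub]
    have hfex : ∃ r₀, ∃ h₀ : DDr r₀, 0 < f r₀ := by
      by_contra hc
      push_neg at hc
      obtain ⟨r, hr, hr1, hr2⟩ := DDr_between (show 0 < t₂ - t₁ by linarith)
        (show t₂ - t₁ < t₂ - t₁ + 1 by linarith)
      have h0 : f r = 0 := le_antisymm (hc r hr) (by rw [hfB r hr]; exact hBnn r hr)
      have h1 := hAB r hr t₁ ht₁pos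
      rw [hall r hr, one_mul, ← hfB r hr, h0, add_zero] at h1
      have h2 := hWmono t₂ (t₁ + r) (by linarith) (by linarith)
      linarith
    obtain ⟨r₀, h₀, hf₀⟩ := hfex
    have hc : 0 < f r₀ / r₀ := div_pos hf₀ (DDr_pos h₀)
    set c := f r₀ / r₀ with hcdef
    have hflin := aux_linear f hfadd hfmono r₀ h₀ hf₀
    have hsand := aux_sandwich W (fun _ => 1) (fun r => c * r) hWmono
      continuous_const (continuous_const.mul continuous_id)
      (by
        intro r t hr ht
        rw [hAB r hr t ht, hall r hr, ← hfB r hr, hflin r hr, ← hcdef])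
    have hWform : ∀ t, 0 < t → W t = c * t + (W 1 - c) := by
      intro t ht
      rcases lt_trichotomy t 1 with h | h | h
      · have h1 := hsand t 1 ht h
        simp only [one_mul] at h1
        linarith
      · rw [h]; ring
      · have h1 := hsand 1 t one_pos h
        simp only [one_mul] at h1
        linarith
    refine ⟨c, W 1 - c, hc, Or.inl ?_⟩
    intro x
    have hVform : ∀ s, 0 < s → s < 1 → V s = c * (-Real.log s) + (W 1 - c) := by
      intro s hs0 hs1
      have hlog : 0 < -Real.log s := by linarith [Real.log_neg hs0 hs1]
      have hWV : W (-Real.log s) = V s := by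
        show V (Real.exp (-(-Real.log s))) = V s
        rw [neg_neg, Real.exp_log hs0]
      rw [← hWV, hWform _ hlog]
    have hTval : T (c * x + (W 1 - c)) = min (Real.exp (-x)) 1 := by
      rcases le_or_gt x 0 with hx | hx
      · have hex : 1 ≤ Real.exp (-x) := by
          rw [← Real.exp_zero]; exact Real.exp_le_exp.mpr (by linarith)
        rw [min_eq_right hex]
        refine le_antisymm (hT1 _) ?_
        by_contra hlt
        push_neg at hlt
        set s := max (T (c * x + (W 1 - c))) 2⁻¹ with hsdef
        have hs0 : (0:ℝ) < s := lt_of_lt_of_le (by norm_num) (le_max_right _ _)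
        have hs1 : s < 1 := max_lt hlt (by norm_num)
        have hVs := (hV s hs0 hs1 _).mp (le_max_left _ _)
        rw [hVform s hs0 hs1] at hVs
        have hlog := Real.log_neg hs0 hs1
        have h1 : 0 < c * (-Real.log s) := mul_pos hc (by linarith)
        have h2 : c * x ≤ 0 := mul_nonpos_of_nonneg_of_nonpos hc.le hx
        linarith
      · have hex0 : 0 < Real.exp (-x) := Real.exp_pos _
        have hex1 : Real.exp (-x) < 1 := by
          rw [← Real.exp_zero]; exact Real.exp_lt_exp.mpr (by linarith)
        rw [min_eq_left hex1.le]
        have hVex : V (Real.exp (-x)) = c * x + (W 1 - c) := by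
          rw [hVform _ hex0 hex1, Real.log_exp]; ring
        refine le_antisymm ?_ ?_
        · exact (hV _ hex0 hex1 _).mpr (le_of_eq hVex)
        · by_contra hlt
          push_neg at hlt
          set s := max (T (c * x + (W 1 - c))) (Real.exp (-x) / 2) with hsdef
          have hs0 : (0:ℝ) < s := lt_of_lt_of_le (by positivity) (le_max_right _ _)
          have hss : s < Real.exp (-x) := max_lt hlt (by linarith)
          have hs1 : s < 1 := by linarith
          have hVs := (hV s hs0 hs1 _).mp (le_max_left _ _)
          rw [hVform s hs0 hs1] at hVs
          have hlog : Real.log s < Real.log (Real.exp (-x)) := Real.log_lt_log hs0 hss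
          rw [Real.log_exp] at hlog
          have h1 : c * (-Real.log s) > c * x := by
            apply mul_lt_mul_of_pos_left _ hc
            linarith
          linarith
    have hGT : G (c * x + (W 1 - c)) = 1 - T (c * x + (W 1 - c)) := by
      simp [hTdef]
    rw [hGT, hTval]
    unfold expDF
    rcases le_total (Real.exp (-x)) 1 with h | h
    · rw [min_eq_left h, max_eq_left (by linarith)]
    · rw [min_eq_right h, max_eq_right (by linarith)]; norm_num
  · -- Case B
    push_neg at hall
    obtain ⟨rs, hrs, hAne⟩ := hall
    have hne1 : (1:ℝ) - AA rs hrs ≠ 0 := by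
      intro hcon
      exact hAne (by linarith [sub_eq_zero.mp hcon])
    set p := BB rs hrs / (1 - AA rs hrs) with hpdef
    have hfix : ∀ r (h : DDr r), AA r h * p + BB r h = p := by
      intro r h
      have e := hcomm rs r hrs h
      have e2 : BB r h * (1 - AA rs hrs) = BB rs hrs * (1 - AA r h) := by
        linear_combination e
      have hpm : p * (1 - AA rs hrs) = BB rs hrs := div_mul_cancel₀ _ hne1
      apply mul_right_cancel₀ hne1
      calc (AA r h * p + BB r h) * (1 - AA rs hrs)
          = AA r h * (p * (1 - AA rs hrs)) + BB r h * (1 - AA rs hrs) := by ring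
        _ = AA r h * BB rs hrs + BB rs hrs * (1 - AA r h) := by rw [hpm, e2]
        _ = BB rs hrs := by ring
        _ = p * (1 - AA rs hrs) := hpm.symm
    set Z : ℝ → ℝ := fun t => W t - p with hZdef
    have hZmono : ∀ t t', 0 < t → t ≤ t' → Z t ≤ Z t' := fun t t' ht htt => by
      simp only [hZdef]; linarith [hWmono t t' ht htt]
    have hZrel : ∀ r (h : DDr r), ∀ t, 0 < t → Z (t + r) = AA r h * Z t := by
      intro r h t ht
      simp only [hZdef]
      linear_combination hAB r h t ht + hfix r h
    have hZlt : Z t₁ < Z t₂ := by simp only [hZdef]; linarith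
    have hsign : (∀ t, 0 < t → 0 ≤ Z t) ∨ (∀ t, 0 < t → Z t ≤ 0) := by
      by_contra hcon
      push_neg at hcon
      obtain ⟨⟨ta, hta, hZa⟩, ⟨tb, htb, hZb⟩⟩ := hcon
      have hconst : ∀ r r' (h : DDr r) (h' : DDr r'), r ≤ r' → AA r h = AA r' h' := by
        intro r r' h h' hle
        have h1 : AA r h * Z tb ≤ AA r' h' * Z tb := by
          rw [← hZrel r h tb htb, ← hZrel r' h' tb htb]
          exact hZmono _ _ (by linarith [DDr_pos h]) (by linarith)
        have h2 : AA r h * Z ta ≤ AA r' h' * Z ta := by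
          rw [← hZrel r h ta hta, ← hZrel r' h' ta hta]
          exact hZmono _ _ (by linarith [DDr_pos h]) (by linarith)
        have g1 : AA r h ≤ AA r' h' := le_of_mul_le_mul_right h1 hZb
        have g2 : AA r' h' ≤ AA r h := by
          by_contra hcg
          push_neg at hcg
          have hx := mul_pos (sub_pos.mpr hcg) (neg_pos.mpr hZa)
          have e : (AA r' h' - AA r h) * (-Z ta) = AA r h * Z ta - AA r' h' * Z ta := by ring
          linarith
        linarith
      have h3 := (hprod rs rs hrs hrs).1
      have h4 := hconst rs (rs + rs) hrs (DDr_add hrs hrs) (by linarith [DDr_pos hrs])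
      rw [h3] at h4
      have h5 := hAApos rs hrs
      have h6 : AA rs hrs * (AA rs hrs - 1) = 0 := by linear_combination -h4
      rcases mul_eq_zero.mp h6 with h7 | h7
      · exact absurd h7 (ne_of_gt h5)
      · exact hAne (by linarith [sub_eq_zero.mp h7])
    rcases hsign with hposZ | hnegZ
    · -- Type II (Pareto)
      have hZb : 0 < Z t₂ := lt_of_le_of_lt (hposZ t₁ ht₁pos) hZlt
      have hAmono : ∀ r r' (h : DDr r) (h' : DDr r'), r ≤ r' → AA r h ≤ AA r' h' := by
        intro r r' h h' hle
        have h1 : AA r h * Z t₂ ≤ AA r' h' * Z t₂ := by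
          rw [← hZrel r h t₂ (by linarith), ← hZrel r' h' t₂ (by linarith)]
          exact hZmono _ _ (by linarith [DDr_pos h]) (by linarith)
        exact le_of_mul_le_mul_right h1 hZb
      have hAge1 : ∀ r (h : DDr r), 1 ≤ AA r h := by
        intro r h
        have h1 := hAmono r (r+r) h (DDr_add h h) (by linarith [DDr_pos h])
        rw [(hprod r r h h).1] at h1
        by_contra hcg
        push_neg at hcg
        have h2 := mul_lt_of_lt_one_right (hAApos r h) hcg
        linarith
      set f : ℝ → ℝ := fun r => if h : DDr r then Real.log (AA r h) else 0 with hfdef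
      have hfA : ∀ r (h : DDr r), f r = Real.log (AA r h) := fun r h => dif_pos h
      have hfadd : ∀ r r', DDr r → DDr r' → f (r + r') = f r + f r' := by
        intro r r' h h'
        rw [hfA r h, hfA r' h', hfA _ (DDr_add h h'), (hprod r r' h h').1,
          Real.log_mul (ne_of_gt (hAApos r h)) (ne_of_gt (hAApos r' h'))]
      have hfmono : ∀ r r', DDr r → DDr r' → r ≤ r' → f r ≤ f r' := by
        intro r r' h h' hle
        rw [hfA r h, hfA r' h']
        exact Real.log_le_log (hAApos r h) (hAmono r r' h h' hle)
      have hfrs : 0 < f rs := by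
        rw [hfA rs hrs]
        apply Real.log_pos
        rcases lt_or_eq_of_le (hAge1 rs hrs) with h | h
        · exact h
        · exact absurd h.symm hAne
      have hflin := aux_linear f hfadd hfmono rs hrs hfrs
      have hρ : 0 < f rs / rs := div_pos hfrs (DDr_pos hrs)
      set ρ := f rs / rs with hρdef
      have hAexp : ∀ r (h : DDr r), AA r h = Real.exp (ρ * r) := by
        intro r h
        have h1 := hflin r h
        rw [hfA r h] at h1
        have h2 := congrArg Real.exp h1
        rwa [Real.exp_log (hAApos r h)] at h2
      have hsand := aux_sandwich Z (fun r => Real.exp (ρ * r)) (fun _ => 0) hZmono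
        (Real.continuous_exp.comp (continuous_const.mul continuous_id)) continuous_const
        (by
          intro r t hr ht
          rw [hZrel r hr t ht, hAexp r hr]; ring)
      have hZform : ∀ t, 0 < t → Z t = (Z 1 * Real.exp (-ρ)) * Real.exp (ρ * t) := by
        intro t ht
        rcases lt_trichotomy t 1 with h | h | h
        · have h1 : Z 1 = Real.exp (ρ * (1 - t)) * Z t + 0 := hsand t 1 ht h
          have e2 : Real.exp (ρ*(1-t)) * (Real.exp (-ρ) * Real.exp (ρ*t)) = 1 := by
            rw [← Real.exp_add, ← Real.exp_add,
              show ρ*(1-t) + (-ρ + ρ*t) = (0:ℝ) by ring, Real.exp_zero]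
          calc Z t = Z t * (Real.exp (ρ*(1-t)) * (Real.exp (-ρ) * Real.exp (ρ*t))) := by
                rw [e2, mul_one]
            _ = (Real.exp (ρ*(1-t)) * Z t + 0) * Real.exp (-ρ) * Real.exp (ρ*t) := by ring
            _ = Z 1 * Real.exp (-ρ) * Real.exp (ρ*t) := by rw [← h1]
            _ = (Z 1 * Real.exp (-ρ)) * Real.exp (ρ*t) := by ring
        · rw [h]
          have e2 : Real.exp (-ρ) * Real.exp (ρ * 1) = 1 := by
            rw [← Real.exp_add, show -ρ + ρ*1 = (0:ℝ) by ring, Real.exp_zero]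
          calc Z 1 = Z 1 * (Real.exp (-ρ) * Real.exp (ρ * 1)) := by rw [e2, mul_one]
            _ = Z 1 * Real.exp (-ρ) * Real.exp (ρ * 1) := by ring
        · have h1 : Z t = Real.exp (ρ * (t - 1)) * Z 1 + 0 := hsand 1 t one_pos h
          have e2 : Real.exp (-ρ) * Real.exp (ρ*t) = Real.exp (ρ*(t-1)) := by
            rw [← Real.exp_add]; congr 1; ring
          rw [h1]
          calc Real.exp (ρ * (t - 1)) * Z 1 + 0
              = Z 1 * Real.exp (ρ*(t-1)) := by ring
            _ = Z 1 * (Real.exp (-ρ) * Real.exp (ρ*t)) := by rw [e2]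
            _ = (Z 1 * Real.exp (-ρ)) * Real.exp (ρ*t) := by ring
      set C := Z 1 * Real.exp (-ρ) with hCdef
      have hC : 0 < C := by
        have h1 : 0 ≤ Z 1 := hposZ 1 one_pos
        rcases lt_or_eq_of_le h1 with h2 | h2
        · exact mul_pos h2 (Real.exp_pos _)
        · exfalso
          have hC0 : C = 0 := by rw [hCdef, ← h2, zero_mul]
          have e1 := hZform t₁ ht₁pos
          have e2 := hZform t₂ (by linarith)
          rw [hC0, zero_mul] at e1 e2
          linarith
      have hVform : ∀ s, 0 < s → s < 1 → V s = C * s ^ (-ρ) + p := by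
        intro s hs0 hs1
        have hlog : 0 < -Real.log s := by linarith [Real.log_neg hs0 hs1]
        have hWV : W (-Real.log s) = V s := by
          show V (Real.exp (-(-Real.log s))) = V s
          rw [neg_neg, Real.exp_log hs0]
        have hexp : Real.exp (ρ * (-Real.log s)) = s ^ (-ρ) := by
          rw [Real.rpow_def_of_pos hs0]; congr 1; ring
        have h5 : Z (-Real.log s) = C * s ^ (-ρ) := by
          rw [hZform _ hlog, hexp, hCdef]
        have h6 : Z (-Real.log s) = W (-Real.log s) - p := rfl
        rw [← hWV]
        linarith
      refine ⟨C, p, hC, Or.inr (Or.inl ⟨1/ρ, one_div_pos.mpr hρ, fun x => ?_⟩)⟩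
      have hGT : G (C * x + p) = 1 - T (C * x + p) := by simp [hTdef]
      unfold paretoDF
      rcases le_or_gt x 1 with hx1 | hx1
      · have hTy : T (C * x + p) = 1 := by
          refine le_antisymm (hT1 _) ?_
          by_contra hlt
          push_neg at hlt
          set s := max (T (C * x + p)) 2⁻¹ with hsdef
          have hs0 : (0:ℝ) < s := lt_of_lt_of_le (by norm_num) (le_max_right _ _)
          have hs1 : s < 1 := max_lt hlt (by norm_num)
          have hVs := (hV s hs0 hs1 _).mp (le_max_left _ _)
          rw [hVform s hs0 hs1] at hVs
          have hrpow : 1 < s ^ (-ρ) := by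
            rw [Real.rpow_def_of_pos hs0]
            apply Real.one_lt_exp_iff.mpr
            have h9 := Real.log_neg hs0 hs1
            exact mul_pos_of_neg_of_neg h9 (by linarith)
          have h1 : C * x ≤ C * 1 := mul_le_mul_of_nonneg_left hx1 hC.le
          have h2 : C * 1 < C * s ^ (-ρ) := (mul_lt_mul_iff_right₀ hC).mpr hrpow
          linarith
        rcases le_or_gt x 0 with hx0 | hx0
        · rw [if_neg (not_lt.mpr hx0), hGT, hTy]; norm_num
        · rw [if_pos hx0, hGT, hTy]
          have h3 : (1:ℝ) ≤ x ^ (-(1/ρ)) :=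
            Real.one_le_rpow_of_pos_of_le_one_of_nonpos hx0 hx1
              (neg_nonpos.mpr (one_div_pos.mpr hρ).le)
          rw [max_eq_right (by linarith)]
          norm_num
      · have hx0 : (0:ℝ) < x := by linarith
        have hst0 : 0 < x ^ (-(1/ρ)) := Real.rpow_pos_of_pos hx0 _
        have hst1 : x ^ (-(1/ρ)) < 1 :=
          Real.rpow_lt_one_of_one_lt_of_neg hx1 (by linarith [one_div_pos.mpr hρ] : -(1/ρ) < 0)
        set sstar := x ^ (-(1/ρ)) with hsstar
        have hstpow : sstar ^ (-ρ) = x := by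
          rw [hsstar, ← Real.rpow_mul hx0.le,
            show (-(1/ρ)) * (-ρ) = (1:ℝ) by field_simp, Real.rpow_one]
        have hVst : V sstar = C * x + p := by rw [hVform sstar hst0 hst1, hstpow]
        have hTy : T (C * x + p) = sstar := by
          refine le_antisymm ((hV sstar hst0 hst1 _).mpr (le_of_eq hVst)) ?_
          by_contra hlt
          push_neg at hlt
          set s := max (T (C * x + p)) (sstar/2) with hsdef
          have hs0 : (0:ℝ) < s := lt_of_lt_of_le (by linarith) (le_max_right _ _)
          have hss : s < sstar := max_lt hlt (by linarith)
          have hs1 : s < 1 := by linarith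
          have hVs := (hV s hs0 hs1 _).mp (le_max_left _ _)
          rw [hVform s hs0 hs1] at hVs
          have hrpow : sstar ^ (-ρ) < s ^ (-ρ) :=
            Real.rpow_lt_rpow_of_neg hs0 hss (by linarith)
          rw [hstpow] at hrpow
          have h2 : C * x < C * s ^ (-ρ) := (mul_lt_mul_iff_right₀ hC).mpr hrpow
          linarith
        rw [if_pos hx0, hGT, hTy]
        rw [max_eq_left (by linarith : (0:ℝ) ≤ 1 - x ^ (-(1/ρ)))]
    · -- Type III (Beta)
      have hZa : Z t₁ < 0 := lt_of_lt_of_le hZlt (hnegZ t₂ (by linarith))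
      have hAanti : ∀ r r' (h : DDr r) (h' : DDr r'), r ≤ r' → AA r' h' ≤ AA r h := by
        intro r r' h h' hle
        have h1 : AA r h * Z t₁ ≤ AA r' h' * Z t₁ := by
          rw [← hZrel r h t₁ ht₁pos, ← hZrel r' h' t₁ ht₁pos]
          exact hZmono _ _ (by linarith [DDr_pos h]) (by linarith)
        by_contra hcg
        push_neg at hcg
        have hx := mul_pos (sub_pos.mpr hcg) (neg_pos.mpr hZa)
        have e : (AA r' h' - AA r h) * (-Z t₁) = AA r h * Z t₁ - AA r' h' * Z t₁ := by ring
        linarith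
      have hAle1 : ∀ r (h : DDr r), AA r h ≤ 1 := by
        intro r h
        have h1 := hAanti r (r+r) h (DDr_add h h) (by linarith [DDr_pos h])
        rw [(hprod r r h h).1] at h1
        by_contra hcg
        push_neg at hcg
        have h2 := lt_mul_of_one_lt_right (hAApos r h) hcg
        linarith
      set f : ℝ → ℝ := fun r => if h : DDr r then -Real.log (AA r h) else 0 with hfdef
      have hfA : ∀ r (h : DDr r), f r = -Real.log (AA r h) := fun r h => dif_pos h
      have hfadd : ∀ r r', DDr r → DDr r' → f (r + r') = f r + f r' := by
        intro r r' h h'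
        rw [hfA r h, hfA r' h', hfA _ (DDr_add h h'), (hprod r r' h h').1,
          Real.log_mul (ne_of_gt (hAApos r h)) (ne_of_gt (hAApos r' h'))]
        ring
      have hfmono : ∀ r r', DDr r → DDr r' → r ≤ r' → f r ≤ f r' := by
        intro r r' h h' hle
        rw [hfA r h, hfA r' h']
        have := Real.log_le_log (hAApos r' h') (hAanti r r' h h' hle)
        linarith
      have hfrs : 0 < f rs := by
        rw [hfA rs hrs]
        have h1 : AA rs hrs < 1 := lt_of_le_of_ne (hAle1 rs hrs) hAne
        have := Real.log_neg (hAApos rs hrs) h1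
        linarith
      have hflin := aux_linear f hfadd hfmono rs hrs hfrs
      have hσ : 0 < f rs / rs := div_pos hfrs (DDr_pos hrs)
      set σ := f rs / rs with hσdef
      have hAexp : ∀ r (h : DDr r), AA r h = Real.exp (-(σ * r)) := by
        intro r h
        have h1 := hflin r h
        rw [hfA r h] at h1
        have h2 : Real.log (AA r h) = -(σ * r) := by linarith
        have h3 := congrArg Real.exp h2
        rwa [Real.exp_log (hAApos r h)] at h3
      have hsand := aux_sandwich Z (fun r => Real.exp (-(σ * r))) (fun _ => 0) hZmono
        (Real.continuous_exp.comp (continuous_const.mul continuous_id).neg) continuous_const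
        (by
          intro r t hr ht
          rw [hZrel r hr t ht, hAexp r hr]; ring)
      have hZform : ∀ t, 0 < t → Z t = (Z 1 * Real.exp σ) * Real.exp (-(σ * t)) := by
        intro t ht
        rcases lt_trichotomy t 1 with h | h | h
        · have h1 : Z 1 = Real.exp (-(σ * (1 - t))) * Z t + 0 := hsand t 1 ht h
          have e2 : Real.exp (-(σ*(1-t))) * (Real.exp σ * Real.exp (-(σ*t))) = 1 := by
            rw [← Real.exp_add, ← Real.exp_add,
              show -(σ*(1-t)) + (σ + -(σ*t)) = (0:ℝ) by ring, Real.exp_zero]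
          calc Z t = Z t * (Real.exp (-(σ*(1-t))) * (Real.exp σ * Real.exp (-(σ*t)))) := by
                rw [e2, mul_one]
            _ = (Real.exp (-(σ*(1-t))) * Z t + 0) * Real.exp σ * Real.exp (-(σ*t)) := by ring
            _ = Z 1 * Real.exp σ * Real.exp (-(σ*t)) := by rw [← h1]
            _ = (Z 1 * Real.exp σ) * Real.exp (-(σ*t)) := by ring
        · rw [h]
          have e2 : Real.exp σ * Real.exp (-(σ * 1)) = 1 := by
            rw [← Real.exp_add, show σ + -(σ*1) = (0:ℝ) by ring, Real.exp_zero]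
          calc Z 1 = Z 1 * (Real.exp σ * Real.exp (-(σ * 1))) := by rw [e2, mul_one]
            _ = (Z 1 * Real.exp σ) * Real.exp (-(σ * 1)) := by ring
        · have h1 : Z t = Real.exp (-(σ * (t - 1))) * Z 1 + 0 := hsand 1 t one_pos h
          have e2 : Real.exp σ * Real.exp (-(σ*t)) = Real.exp (-(σ*(t-1))) := by
            rw [← Real.exp_add]; congr 1; ring
          rw [h1]
          calc Real.exp (-(σ * (t - 1))) * Z 1 + 0
              = Z 1 * Real.exp (-(σ*(t-1))) := by ring
            _ = Z 1 * (Real.exp σ * Real.exp (-(σ*t))) := by rw [e2]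
            _ = (Z 1 * Real.exp σ) * Real.exp (-(σ*t)) := by ring
      set C := Z 1 * Real.exp σ with hCdef
      have hC : C < 0 := by
        have h1 : Z 1 ≤ 0 := hnegZ 1 one_pos
        rcases lt_or_eq_of_le h1 with h2 | h2
        · exact mul_neg_of_neg_of_pos h2 (Real.exp_pos _)
        · exfalso
          have hC0 : C = 0 := by rw [hCdef, h2, zero_mul]
          have e1 := hZform t₁ ht₁pos
          have e2 := hZform t₂ (by linarith)
          rw [hC0, zero_mul] at e1 e2
          linarith
      have hVform : ∀ s, 0 < s → s < 1 → V s = C * s ^ σ + p := by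
        intro s hs0 hs1
        have hlog : 0 < -Real.log s := by linarith [Real.log_neg hs0 hs1]
        have hWV : W (-Real.log s) = V s := by
          show V (Real.exp (-(-Real.log s))) = V s
          rw [neg_neg, Real.exp_log hs0]
        have hexp : Real.exp (-(σ * -Real.log s)) = s ^ σ := by
          rw [Real.rpow_def_of_pos hs0]; congr 1; ring
        have h5 : Z (-Real.log s) = C * s ^ σ := by
          rw [hZform _ hlog, hexp]
        have h6 : Z (-Real.log s) = W (-Real.log s) - p := rfl
        rw [← hWV]
        linarith
      have hCpos : 0 < -C := by linarith
      refine ⟨-C, p, hCpos, Or.inr (Or.inr ⟨1/σ, one_div_pos.mpr hσ, fun x => ?_⟩)⟩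
      have hGT : G (-C * x + p) = 1 - T (-C * x + p) := by simp [hTdef]
      unfold betaDF
      rcases le_or_gt x (-1) with hx1 | hx1
      · have hTy : T (-C * x + p) = 1 := by
          refine le_antisymm (hT1 _) ?_
          by_contra hlt
          push_neg at hlt
          set s := max (T (-C * x + p)) 2⁻¹ with hsdef
          have hs0 : (0:ℝ) < s := lt_of_lt_of_le (by norm_num) (le_max_right _ _)
          have hs1 : s < 1 := max_lt hlt (by norm_num)
          have hVs := (hV s hs0 hs1 _).mp (le_max_left _ _)
          rw [hVform s hs0 hs1] at hVs
          have hrpow : s ^ σ < 1 := Real.rpow_lt_one hs0.le hs1 hσ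
          have h1 : C * 1 < C * s ^ σ := mul_lt_mul_of_neg_left hrpow hC
          have h2 : -C * x ≤ -C * (-1) := mul_le_mul_of_nonneg_left hx1 hCpos.le
          linarith
        rw [if_pos hx1, hGT, hTy]; norm_num
      · rcases lt_or_ge x 0 with hx0 | hx0
        · have hax0 : 0 < -x := by linarith
          have hax1 : -x < 1 := by linarith
          have habs : |x| = -x := abs_of_neg (by linarith)
          have hst0 : 0 < |x| ^ (1/σ) := by
            rw [habs]; exact Real.rpow_pos_of_pos hax0 _
          have hst1 : |x| ^ (1/σ) < 1 := by
            rw [habs]; exact Real.rpow_lt_one hax0.le hax1 (one_div_pos.mpr hσ)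
          set sstar := |x| ^ (1/σ) with hsstar
          have hstpow : sstar ^ σ = -x := by
            rw [hsstar, habs, ← Real.rpow_mul hax0.le,
              show (1/σ) * σ = (1:ℝ) by field_simp, Real.rpow_one]
          have hVst : V sstar = -C * x + p := by
            rw [hVform sstar hst0 hst1, hstpow]; ring
          have hTy : T (-C * x + p) = sstar := by
            refine le_antisymm ((hV sstar hst0 hst1 _).mpr (le_of_eq hVst)) ?_
            by_contra hlt
            push_neg at hlt
            set s := max (T (-C * x + p)) (sstar/2) with hsdef
            have hs0 : (0:ℝ) < s := lt_of_lt_of_le (by linarith) (le_max_right _ _)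
            have hss : s < sstar := max_lt hlt (by linarith)
            have hs1 : s < 1 := by linarith
            have hVs := (hV s hs0 hs1 _).mp (le_max_left _ _)
            rw [hVform s hs0 hs1] at hVs
            have hrpow : s ^ σ < sstar ^ σ := Real.rpow_lt_rpow hs0.le hss hσ
            have h2 : C * sstar ^ σ < C * s ^ σ := mul_lt_mul_of_neg_left hrpow hC
            rw [hstpow] at h2
            linarith
          rw [if_neg (not_le.mpr hx1), if_pos hx0.le, hGT, hTy]
        · have hTy : T (-C * x + p) = 0 := by
            have hle : ∀ s, 0 < s → s < 1 → T (-C * x + p) ≤ s := by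
              intro s hs0 hs1
              apply (hV s hs0 hs1 _).mpr
              rw [hVform s hs0 hs1]
              have h1 : C * s ^ σ < 0 :=
                mul_neg_of_neg_of_pos hC (Real.rpow_pos_of_pos hs0 _)
              have h2 : 0 ≤ -C * x := mul_nonneg hCpos.le hx0
              linarith
            refine le_antisymm ?_ (hT0 _)
            by_contra hlt
            push_neg at hlt
            have h4 := hle (min (T (-C * x + p) / 2) 2⁻¹)
              (lt_min (by linarith) (by norm_num))
              (lt_of_le_of_lt (min_le_right _ _) (by norm_num))
            have h3 : min (T (-C * x + p) / 2) 2⁻¹ ≤ T (-C * x + p) / 2 := min_le_left _ _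
            linarith
          rw [if_neg (not_le.mpr hx1), hGT, hTy]
          rcases le_or_gt x 0 with hx2 | hx2
          · have hx3 : x = 0 := le_antisymm hx2 hx0
            rw [if_pos hx2, hx3]
            rw [abs_zero, Real.zero_rpow (ne_of_gt (one_div_pos.mpr hσ))]
          · rw [if_neg (not_le.mpr hx2)]
            norm_num

end Forward

/-- A nondegenerate distribution function is freely max-stable iff it is
of free extreme-value type. -/
theorem freelyMaxStable_iff_freeExtremeValueType
    (G : ℝ → ℝ) (hG : IsDistFun G) (hnd : ∃ x, 0 < G x ∧ G x < 1) :
    FreelyMaxStable G ↔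
      ∃ a b : ℝ, 0 < a ∧
        ((∀ x : ℝ, G (a * x + b) = expDF x) ∨
         (∃ α : ℝ, 0 < α ∧ ∀ x : ℝ, G (a * x + b) = paretoDF α x) ∨
         (∃ α : ℝ, 0 < α ∧ ∀ x : ℝ, G (a * x + b) = betaDF α x)) := by
  constructor
  · intro hms
    exact forward_classification G hG hnd hms
  · rintro ⟨a, b, ha, hcase⟩
    rcases hcase with h | ⟨α, hα, h⟩ | ⟨α, hα, h⟩
    · exact transfer_fms G expDF a b ha h expDF_fms
    · exact transfer_fms G (paretoDF α) a b ha h (paretoDF_fms α hα)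
    · exact transfer_fms G (betaDF α) a b ha h (betaDF_fms α hα)
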